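/- Let X be a connected compact metric space and G a free semigroup action on X generated by finitely many continuous maps f_0,…,f_{m−1}. Then the following are equivalent: (1) G is chain recurrent; (2) G is chain transitive; (3) G is totally chain transitive; (4) G is chain mixing. -/

import Mathlib

open Metric Filter Set
open scoped Classical

noncomputable section

variable {X : Type*} [MetricSpace X] {Y : Type*} [MetricSpace Y] {ι κ : Type*}

/-- `c` satisfies the `(w, δ)`-chain condition along the word `w`. -/
def IsChainSeq (f : ι → X → X) (w : List ι) (δ : ℝ) (c : ℕ → X) : Prop :=
  ∀ (j : ℕ) (h : j < w.length), dist (f (w.get ⟨j, h⟩) (c j)) (c (j + 1)) ≤ δ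

/-- There is a `(w, δ)`-chain from `a` to `b` with `|w| = n`. -/
def ChainFrom (f : ι → X → X) (δ : ℝ) (a b : X) (n : ℕ) : Prop :=
  ∃ w : List ι, w.length = n ∧ ∃ c : ℕ → X, IsChainSeq f w δ c ∧ c 0 = a ∧ c n = b

/-- `x` is a chain recurrent point of the action generated by `f`. -/
def ChainRecurrentPt (f : ι → X → X) (x : X) : Prop :=
  ∀ ε : ℝ, 0 < ε → ∃ n : ℕ, 0 < n ∧ ChainFrom f ε x x n

/-- The action generated by `f` is chain recurrent. -/
def ChainRecurrent (f : ι → X → X) : Prop := ∀ x : X, ChainRecurrentPt f x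

/-- The action generated by `f` is chain transitive. -/
def ChainTransitive (f : ι → X → X) : Prop :=
  ∀ ε : ℝ, 0 < ε → ∀ a b : X, ∃ n : ℕ, 0 < n ∧ ChainFrom f ε a b n

/-- The action generated by `f` is chain mixing. -/
def ChainMixing (f : ι → X → X) : Prop :=
  ∀ ε : ℝ, 0 < ε → ∃ N : ℕ, 0 < N ∧ ∀ a b : X, ∀ n : ℕ, N ≤ n → ChainFrom f ε a b n

/-- The `ε`-chain recurrence time `r_ε(x, G)`. -/
def rTime (f : ι → X → X) (ε : ℝ) (x : X) : ℕ :=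
  sInf {n : ℕ | 0 < n ∧ ChainFrom f ε x x n}

/-- `r_ε(G) = max_x r_ε(x, G)`. -/
def rTimeSup (f : ι → X → X) (ε : ℝ) : ℕ :=
  sSup (Set.range fun x : X => rTime f ε x)

/-- The chain mixing time `m_ε(x, δ, G)`. -/
def mTime (f : ι → X → X) (ε δ : ℝ) (x : X) : ℕ :=
  sInf {N : ℕ | ∀ n : ℕ, N ≤ n → ∀ y : X, ∃ z : X, dist z x < δ ∧ ChainFrom f ε z y n}

/-- `m_ε(δ, G) = max_x m_ε(x, δ, G)`. -/
def mTimeSup (f : ι → X → X) (ε δ : ℝ) : ℕ :=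
  sSup (Set.range fun x : X => mTime f ε δ x)

/-- `f_w = f_{i₀} ∘ f_{i₁} ∘ ⋯ ∘ f_{i_{k-1}}` applied to `x`. -/
def applyWord (f : ι → X → X) (w : List ι) (x : X) : X := w.foldr f x

/-- The generators of `G^k`, indexed by the words of length `k`. -/
def powerGens (f : ι → X → X) (k : ℕ) : (Fin k → ι) → X → X :=
  fun u => applyWord f (List.ofFn u)

/-- The generators `f_j × g_k` of the product action `G × H`. -/
def prodGens (f : ι → X → X) (g : κ → Y → Y) : ι × κ → X × Y → X × Y :=
  fun p z => (f p.1 z.1, g p.2 z.2)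

/-- `T_ε(x)`: the set of lengths of `(w, ε)`-chains from `x` to itself. -/
def Tset (f : ι → X → X) (ε : ℝ) (x : X) : Set ℕ :=
  {n : ℕ | 0 < n ∧ ChainFrom f ε x x n}

/-- `k = gcd T` for a set `T ⊆ ℕ`. -/
def IsGCDOf (T : Set ℕ) (k : ℕ) : Prop :=
  (∀ t ∈ T, k ∣ t) ∧ ∀ d : ℕ, (∀ t ∈ T, d ∣ t) → d ∣ k

/-- `x ∼_ε y`: there is an `(w, ε)`-chain from `x` to `y` whose length is a multiple of `k`. -/
def RelEps (f : ι → X → X) (ε : ℝ) (k : ℕ) (x y : X) : Prop :=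
  ∃ n : ℕ, 0 < n ∧ k ∣ n ∧ ChainFrom f ε x y n

/-- The orbit segment: the first `j` letters of `w` applied, in order, to `x`. -/
def orbitSeg (f : ι → X → X) (w : List ι) (x : X) (j : ℕ) : X :=
  (w.take j).foldl (fun y i => f i y) x

/-- The Bowen-type word metric `d_w`. -/
def wordDist (f : ι → X → X) (w : List ι) (x y : X) : ℝ :=
  ⨆ j : Fin (w.length + 1), dist (orbitSeg f w x (j : ℕ)) (orbitSeg f w y (j : ℕ))

/-- `N(w, ε, G)`: maximal cardinality of a `(w, ε, G)`-separated subset of `X`. -/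
def sepMax (f : ι → X → X) (w : List ι) (ε : ℝ) : ℕ :=
  sSup {k : ℕ | ∃ K : Finset X,
    (∀ x ∈ K, ∀ y ∈ K, x ≠ y → ε ≤ wordDist f w x y) ∧ K.card = k}

/-- Bufetov's topological entropy `h(G)` of a free semigroup action. -/
def topEntropy {m : ℕ} (f : Fin m → X → X) : ℝ :=
  ⨆ ε : {e : ℝ // 0 < e},
    Filter.limsup (fun n : ℕ =>
      Real.log ((∑ w : Fin n → Fin m, (sepMax f (List.ofFn w) ε.1 : ℝ)) / (m : ℝ) ^ n) / (n : ℝ))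
      Filter.atTop

/-- `N*(w, ε, δ, G)`: maximal cardinality of a `(w, ε, δ, G)`-pseudo-separated set. -/
def pseudoSepMax (f : ι → X → X) (w : List ι) (ε δ : ℝ) : ℕ :=
  sSup {k : ℕ | ∃ K : Finset (ℕ → X),
    (∀ c ∈ K, IsChainSeq f w δ c) ∧
    (∀ c ∈ K, ∀ c' ∈ K, c ≠ c' → ∃ j : ℕ, j < w.length ∧ ε < dist (c j) (c' j)) ∧
    K.card = k}

/-- `B*(w, ε, δ, G)`: minimal cardinality of a `(w, ε, δ, G)`-pseudo-spanning set. -/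
def pseudoSpanMin (f : ι → X → X) (w : List ι) (ε δ : ℝ) : ℕ :=
  sInf {k : ℕ | ∃ K : Finset (ℕ → X),
    (∀ c ∈ K, IsChainSeq f w δ c) ∧
    (∀ c : ℕ → X, IsChainSeq f w δ c →
      ∃ c' ∈ K, ∀ j : ℕ, j < w.length → dist (c j) (c' j) ≤ ε) ∧
    K.card = k}

/-- The pseudo-entropy `h*(G)` of a free semigroup action. -/
def pseudoEntropy {m : ℕ} (f : Fin m → X → X) : ℝ :=
  ⨆ ε : {e : ℝ // 0 < e}, ⨅ δ : {d : ℝ // 0 < d},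
    Filter.limsup (fun n : ℕ =>
      Real.log ((∑ w : Fin n → Fin m, (pseudoSepMax f (List.ofFn w) ε.1 δ.1 : ℝ)) / (m : ℝ) ^ n)
        / (n : ℝ)) Filter.atTop

/-- The metric `d'(ω, ω') = m^{-k}`, `k = inf {n | ωₙ ≠ ω'ₙ}`, on `Σ_m^+ = ℕ → Fin m`. -/
def sigmaDist (m : ℕ) (ω ω' : ℕ → Fin m) : ℝ :=
  if h : ∃ n : ℕ, ω n ≠ ω' n then (1 / (m : ℝ)) ^ Nat.find h else 0

/-- The metric `D = max {d', d}` on `Σ_m^+ × X`. -/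
def skewDist (m : ℕ) (p q : (ℕ → Fin m) × X) : ℝ :=
  max (sigmaDist m p.1 q.1) (dist p.2 q.2)

/-- The skew-product transformation `F(ω, x) = (σ ω, f_{ω 0} x)`. -/
def skewMap {m : ℕ} (f : Fin m → X → X) : (ℕ → Fin m) × X → (ℕ → Fin m) × X :=
  fun p => (fun n => p.1 (n + 1), f (p.1 0) p.2)

/-- `c` is a `δ`-pseudo-orbit of length `n + 1` of the single map `F`,
w.r.t. the distance function `D`. -/
def IsPseudoOrbit {Z : Type*} (D : Z → Z → ℝ) (F : Z → Z) (n : ℕ) (δ : ℝ) (c : ℕ → Z) : Prop :=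
  ∀ j : ℕ, j < n → D (F (c j)) (c (j + 1)) ≤ δ

/-- `N*(n, ε, δ, F)` for a single map `F` w.r.t. a distance function `D`. -/
def pseudoSepMaxMap {Z : Type*} (D : Z → Z → ℝ) (F : Z → Z) (n : ℕ) (ε δ : ℝ) : ℕ :=
  sSup {k : ℕ | ∃ K : Finset (ℕ → Z),
    (∀ c ∈ K, IsPseudoOrbit D F n δ c) ∧
    (∀ c ∈ K, ∀ c' ∈ K, c ≠ c' → ∃ j : ℕ, j < n ∧ ε < D (c j) (c' j)) ∧
    K.card = k}

/-- `B*(n, ε, δ, F)` for a single map `F` w.r.t. a distance function `D`. -/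
def pseudoSpanMinMap {Z : Type*} (D : Z → Z → ℝ) (F : Z → Z) (n : ℕ) (ε δ : ℝ) : ℕ :=
  sInf {k : ℕ | ∃ K : Finset (ℕ → Z),
    (∀ c ∈ K, IsPseudoOrbit D F n δ c) ∧
    (∀ c : ℕ → Z, IsPseudoOrbit D F n δ c →
      ∃ c' ∈ K, ∀ j : ℕ, j ≤ n → D (c j) (c' j) ≤ ε) ∧
    K.card = k}

/-- The pseudo-entropy `h*(F)` of a single map `F` w.r.t. a distance function `D`. -/
def pseudoEntropyMap {Z : Type*} (D : Z → Z → ℝ) (F : Z → Z) : ℝ :=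
  ⨆ ε : {e : ℝ // 0 < e}, ⨅ δ : {d : ℝ // 0 < d},
    Filter.limsup (fun n : ℕ =>
      Real.log (pseudoSepMaxMap D F n ε.1 δ.1 : ℝ) / (n : ℝ)) Filter.atTop

/-- An `ε`-chain of length `n` from `a` to `b` for a single map. -/
def ChainFromMap {Z : Type*} (D : Z → Z → ℝ) (F : Z → Z) (δ : ℝ) (a b : Z) (n : ℕ) : Prop :=
  ∃ c : ℕ → Z, IsPseudoOrbit D F n δ c ∧ c 0 = a ∧ c n = b

/-- `r_ε(z, F)` for a single map. -/
def rTimeMap {Z : Type*} (D : Z → Z → ℝ) (F : Z → Z) (ε : ℝ) (z : Z) : ℕ :=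
  sInf {n : ℕ | 0 < n ∧ ChainFromMap D F ε z z n}

/-- `r_ε(F)` for a single map. -/
def rTimeMapSup {Z : Type*} (D : Z → Z → ℝ) (F : Z → Z) (ε : ℝ) : ℕ :=
  sSup (Set.range fun z : Z => rTimeMap D F ε z)

/-- `m_ε(z, δ, F)` for a single map. -/
def mTimeMap {Z : Type*} (D : Z → Z → ℝ) (F : Z → Z) (ε δ : ℝ) (z : Z) : ℕ :=
  sInf {N : ℕ | ∀ n : ℕ, N ≤ n → ∀ y : Z, ∃ z' : Z, D z' z < δ ∧ ChainFromMap D F ε z' y n}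

/-- `m_ε(δ, F)` for a single map. -/
def mTimeMapSup {Z : Type*} (D : Z → Z → ℝ) (F : Z → Z) (ε δ : ℝ) : ℕ :=
  sSup (Set.range fun z : Z => mTimeMap D F ε δ z)

/-- `N_δ(X)`: the smallest number of sets of diameter at most `δ` that cover `X`. -/
def coverNum (X : Type*) [MetricSpace X] (δ : ℝ) : ℕ :=
  sInf {k : ℕ | ∃ S : Finset (Set X),
    (∀ s ∈ S, Metric.diam s ≤ δ) ∧ (⋃ s ∈ S, s) = Set.univ ∧ S.card = k}

/-- The upper box dimension of `X`. -/
def upperBoxDim (X : Type*) [MetricSpace X] : ℝ :=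
  Filter.limsup (fun δ : ℝ => Real.log (coverNum X δ : ℝ) / (-Real.log δ))
    (nhdsWithin 0 (Set.Ioi 0))

/-- The lower box dimension of `X`. -/
def lowerBoxDim (X : Type*) [MetricSpace X] : ℝ :=
  Filter.liminf (fun δ : ℝ => Real.log (coverNum X δ : ℝ) / (-Real.log δ))
    (nhdsWithin 0 (Set.Ioi 0))

end

section ChainAux
variable {X : Type*} [MetricSpace X] {ι : Type*} {f : ι → X → X}

def ChainFun (f : ι → X → X) (δ : ℝ) (a b : X) (n : ℕ) : Prop :=
  ∃ w : ℕ → ι, ∃ c : ℕ → X, c 0 = a ∧ c n = b ∧ ∀ j < n, dist (f (w j) (c j)) (c (j+1)) ≤ δ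

lemma ChainFun.chainFrom {δ : ℝ} {a b : X} {n : ℕ} (h : ChainFun f δ a b n) :
    ChainFrom f δ a b n := by
  obtain ⟨w, c, h0, hn, hs⟩ := h
  refine ⟨List.ofFn (fun j : Fin n => w j), by simp, c, ?_, h0, hn⟩
  intro j hj
  have hj' : j < n := by simpa using hj
  simpa using hs j hj'

lemma ChainFrom.chainFun {δ : ℝ} {a b : X} {n : ℕ} (hn : 0 < n) (h : ChainFrom f δ a b n) :
    ChainFun f δ a b n := by
  obtain ⟨w, hw, c, hs, h0, hend⟩ := h
  have hw0 : 0 < w.length := by omega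
  refine ⟨fun j => if hj : j < w.length then w.get ⟨j, hj⟩ else w.get ⟨0, hw0⟩, c, h0, hend, ?_⟩
  intro j hj
  have hj' : j < w.length := by omega
  simpa [dif_pos hj'] using hs j hj'

lemma ChainFun.trans {δ : ℝ} {a b c : X} {n n' : ℕ} (h1 : ChainFun f δ a b n)
    (h2 : ChainFun f δ b c n') : ChainFun f δ a c (n + n') := by
  obtain ⟨w1, c1, e0, e1, s1⟩ := h1
  obtain ⟨w2, c2, g0, g1, s2⟩ := h2
  refine ⟨fun j => if j < n then w1 j else w2 (j - n),
          fun j => if j < n then c1 j else c2 (j - n), ?_, ?_, ?_⟩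
  · by_cases h : 0 < n
    · simp [h, e0]
    · have hn : n = 0 := by omega
      simp [hn, g0, ← e0, ← e1, hn]
  · have : ¬ (n + n' < n) := by omega
    simp [this, g1]
  · intro j hj
    by_cases h : j < n
    · have hcj : (if j < n then c1 j else c2 (j - n)) = c1 j := by simp [h]
      have hcj1 : (if j + 1 < n then c1 (j+1) else c2 (j + 1 - n)) = c1 (j+1) := by
        by_cases h' : j + 1 < n
        · simp [h']
        · have : j + 1 = n := by omega
          simp [h', this, g0, e1]
      have hs1 := s1 j h
      rw [← hcj1] at hs1
      simpa [h] using hs1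
    · have hj1 : ¬ (j + 1 < n) := by omega
      have e1' : j + 1 - n = (j - n) + 1 := by omega
      have := s2 (j - n) (by omega)
      simpa [h, hj1, e1'] using this

lemma ChainFrom.mono {δ δ' : ℝ} {a b : X} {n : ℕ} (h : ChainFrom f δ a b n) (hδ : δ ≤ δ') :
    ChainFrom f δ' a b n := by
  obtain ⟨w, hw, c, hs, h0, hend⟩ := h
  exact ⟨w, hw, c, fun j hj => (hs j hj).trans hδ, h0, hend⟩

lemma chainFun_single {δ : ℝ} (hδ : 0 ≤ δ) (i : ι) (x : X) : ChainFun f δ x (f i x) 1 := by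
  refine ⟨fun _ => i, fun j => if j = 0 then x else f i x, by simp, by simp, ?_⟩
  intro j hj
  interval_cases j
  simpa using hδ

lemma ChainFun.perturb_end {δ η : ℝ} {a b b' : X} {n : ℕ} (hn : 0 < n)
    (h : ChainFun f δ a b n) (hd : dist b b' ≤ η) : ChainFun f (δ + η) a b' n := by
  obtain ⟨w, c, h0, hend, hs⟩ := h
  have hη : 0 ≤ η := le_trans dist_nonneg hd
  refine ⟨w, fun j => if j = n then b' else c j,
    by simp [show (0:ℕ) ≠ n by omega, h0], by simp, ?_⟩
  intro j hj
  have hjn : j ≠ n := by omega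
  by_cases h' : j + 1 = n
  · have : dist (f (w j) (c j)) b' ≤ δ + η := by
      calc dist (f (w j) (c j)) b' ≤ dist (f (w j) (c j)) (c (j+1)) + dist (c (j+1)) b' :=
            dist_triangle _ _ _
        _ ≤ δ + η := by
            have := hs j hj
            have hcb : c (j+1) = b := by rw [h', hend]
            rw [hcb] at this ⊢; linarith
    simpa [hjn, h']
  · have := hs j hj
    simp only [hjn, h', if_false]
    linarith

lemma ChainFun.perturb_start {δ η : ℝ} {a a' b : X} {n : ℕ} (hn : 0 < n)
    (h : ChainFun f δ a b n) (hd : ∀ i, dist (f i a') (f i a) ≤ η) : ChainFun f (δ + η) a' b n := by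
  obtain ⟨w, c, h0, hend, hs⟩ := h
  have hη : 0 ≤ η := le_trans dist_nonneg (hd (w 0))
  refine ⟨w, fun j => if j = 0 then a' else c j, by simp,
    by simp [show n ≠ 0 by omega, hend], ?_⟩
  intro j hj
  by_cases h' : j = 0
  · subst h'
    have : dist (f (w 0) a') (c 1) ≤ η + δ := by
      calc dist (f (w 0) a') (c 1) ≤ dist (f (w 0) a') (f (w 0) a) + dist (f (w 0) a) (c 1) :=
            dist_triangle _ _ _
        _ ≤ η + δ := by
            have := hs 0 hj
            rw [h0] at this; linarith [hd (w 0)]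
    have hgoal : dist (f (w 0) a') (c 1) ≤ δ + η := by linarith
    simpa [show (1:ℕ) ≠ 0 by omega] using hgoal

  · have := hs j hj
    simp only [h', show j + 1 ≠ 0 by omega, if_false]
    linarith

end ChainAux

section Aux2
variable {X : Type*} [MetricSpace X]

lemma exists_modulus {m : ℕ} (f : Fin m → X → X) [CompactSpace X] (hf : ∀ i, Continuous (f i))
    {ε : ℝ} (hε : 0 < ε) : ∃ η > 0, ∀ (i : Fin m) (u v : X), dist u v ≤ η →
      dist (f i u) (f i v) ≤ ε := by
  have h1 : ∀ i : Fin m, ∃ δ > 0, ∀ u v : X, dist u v ≤ δ → dist (f i u) (f i v) ≤ ε := by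
    intro i
    have uc := CompactSpace.uniformContinuous_of_continuous (hf i)
    obtain ⟨δ, hδ, h⟩ := Metric.uniformContinuous_iff.mp uc ε hε
    exact ⟨δ/2, by positivity, fun u v huv => le_of_lt (h (lt_of_le_of_lt huv (by linarith)))⟩
  choose δf hδf hδ using h1
  rcases Nat.eq_zero_or_pos m with hm | hm
  · exact ⟨1, one_pos, fun i => absurd i.2 (by omega)⟩
  · have hne : (Finset.univ : Finset (Fin m)).Nonempty := by
      simpa [Finset.univ_nonempty_iff] using Fin.pos_iff_nonempty.mp hm
    refine ⟨Finset.univ.inf' hne δf, ?_, ?_⟩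
    · exact (Finset.lt_inf'_iff hne).mpr fun i _ => hδf i
    · intro i u v h
      exact hδ i u v (h.trans (Finset.inf'_le _ (Finset.mem_univ i)))

lemma mul_mem_addclosed {T : Set ℕ} (hadd : ∀ a ∈ T, ∀ b ∈ T, a + b ∈ T) {t : ℕ} (ht : t ∈ T) :
    ∀ k, 0 < k → k * t ∈ T := by
  intro k hk
  induction k with
  | zero => omega
  | succ k ih =>
    rcases Nat.eq_zero_or_pos k with h | h
    · simpa [h] using ht
    · have := hadd _ (ih h) _ ht
      simpa [Nat.succ_mul] using this

lemma cofinite_of_addclosed (T : Set ℕ) (hne : T.Nonempty)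
    (hadd : ∀ a ∈ T, ∀ b ∈ T, a + b ∈ T)
    (hgcd : ∀ d : ℕ, (∀ t ∈ T, d ∣ t) → d = 1) :
    ∃ N, ∀ n ≥ N, n ∈ T := by
  classical
  set Mn : AddSubmonoid ℕ := AddSubmonoid.closure T with hMn
  have hMnT : ∀ x ∈ Mn, x = 0 ∨ x ∈ T := by
    intro x hx
    induction hx using AddSubmonoid.closure_induction with
    | mem y hy => exact Or.inr hy
    | zero => exact Or.inl rfl
    | add a b _ _ ha hb =>
      rcases ha with ha | ha
      · rcases hb with hb | hb
        · exact Or.inl (by omega)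
        · exact Or.inr (by simpa [ha] using hb)
      · rcases hb with hb | hb
        · exact Or.inr (by simpa [hb] using ha)
        · exact Or.inr (hadd _ ha _ hb)
  set H : AddSubgroup ℤ := AddSubgroup.closure ((fun t : ℕ => (t : ℤ)) '' T) with hH
  obtain ⟨g, hg⟩ := Int.subgroup_cyclic H
  have hdvd : ∀ t ∈ T, g.natAbs ∣ t := by
    intro t ht
    have : (t : ℤ) ∈ H := AddSubgroup.subset_closure ⟨t, ht, rfl⟩
    rw [hg, AddSubgroup.mem_closure_singleton] at this
    obtain ⟨k, hk⟩ := this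
    have hgt : g ∣ (t : ℤ) := ⟨k, by rw [← hk, smul_eq_mul, mul_comm]⟩
    have := Int.natAbs_dvd_natAbs.mpr hgt
    simpa using this
  have hg1 : g.natAbs = 1 := hgcd _ hdvd
  have hone : (1 : ℤ) ∈ H := by
    rcases Int.natAbs_eq_iff.mp hg1 with h | h
    · rw [hg, h]; exact AddSubgroup.mem_closure_singleton.mpr ⟨1, by norm_num⟩
    · rw [hg, h]; exact AddSubgroup.mem_closure_singleton.mpr ⟨-1, by norm_num⟩
  have hdiff : ∀ z ∈ H, ∃ x ∈ Mn, ∃ y ∈ Mn, z = (x : ℤ) - y := by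
    intro z hz
    induction hz using AddSubgroup.closure_induction with
    | mem w hw =>
      obtain ⟨t, ht, rfl⟩ := hw
      exact ⟨t, AddSubmonoid.subset_closure ht, 0, zero_mem _, by simp⟩
    | zero => exact ⟨0, zero_mem _, 0, zero_mem _, by simp⟩
    | add a b _ _ ha hb =>
      obtain ⟨x1, hx1, y1, hy1, rfl⟩ := ha
      obtain ⟨x2, hx2, y2, hy2, rfl⟩ := hb
      exact ⟨x1 + x2, add_mem hx1 hx2, y1 + y2, add_mem hy1 hy2, by push_cast; ring⟩
    | neg a _ ha =>
      obtain ⟨x1, hx1, y1, hy1, rfl⟩ := ha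
      exact ⟨y1, hy1, x1, hx1, by push_cast; ring⟩
  obtain ⟨x, hx, y, hy, hxy⟩ := hdiff 1 hone
  have hxy' : x = y + 1 := by
    have : (x : ℤ) = (y : ℤ) + 1 := by linarith
    exact_mod_cast this
  rcases Nat.eq_zero_or_pos y with hy0 | hy0
  · have h1T : 1 ∈ T := by
      rcases hMnT x hx with h | h
      · omega
      · rwa [hxy', hy0] at h
    exact ⟨1, fun n hn => by simpa using mul_mem_addclosed hadd h1T n (by omega)⟩
  · have hyT : y ∈ T := by
      rcases hMnT y hy with h | h
      · omega
      · exact h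
    have hy1T : y + 1 ∈ T := by
      rcases hMnT x hx with h | h
      · omega
      · rwa [hxy'] at h
    refine ⟨y * y, fun n hn => ?_⟩
    set q := n / y with hq
    set r := n % y with hr
    have hry : r < y := Nat.mod_lt _ hy0
    have hqy : y ≤ q := (Nat.le_div_iff_mul_le hy0).mpr hn
    have hnd : y * q + r = n := Nat.div_add_mod n y
    have hqr : r < q := lt_of_lt_of_le hry hqy
    have hid : n = (q - r) * y + r * (y + 1) := by
      have : (q - r) * y = q * y - r * y := Nat.sub_mul _ _ _
      have hrq : r * y ≤ q * y := Nat.mul_le_mul_right _ (le_of_lt hqr)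
      have hc : y * q = q * y := Nat.mul_comm _ _
      have hc2 : r * (y + 1) = r * y + r := by ring
      omega
    rcases Nat.eq_zero_or_pos r with hr0 | hr0
    · rw [hid]
      simpa [hr0] using mul_mem_addclosed hadd hyT (q - r) (by omega)
    · rw [hid]
      exact hadd _ (mul_mem_addclosed hadd hyT (q - r) (by omega)) _
        (mul_mem_addclosed hadd hy1T r hr0)

end Aux2

section AuxC
variable {X : Type*} [MetricSpace X] {ι : Type*}

def orbFun (f : ι → X → X) (w : ℕ → ι) (x : X) : ℕ → X
  | 0 => x
  | (t+1) => f (w t) (orbFun f w x t)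

lemma orbFun_eq_applyWord (f : ι → X → X) (w : ℕ → ι) (x : X) :
    ∀ k, orbFun f w x k = applyWord f (List.ofFn fun l : Fin k => w (k - 1 - (l : ℕ))) x := by
  intro k
  induction k with
  | zero => simp [orbFun, applyWord]
  | succ k ih =>
    have hofn : (List.ofFn fun l : Fin (k+1) => w (k + 1 - 1 - (l : ℕ)))
        = w k :: List.ofFn fun l : Fin k => w (k - 1 - (l : ℕ)) := by
      rw [List.ofFn_succ]
      congr 1
      congr 1
      funext l
      congr 1
      rw [Fin.val_succ]
      omega
    rw [hofn]
    show f (w k) (orbFun f w x k) = f (w k) (applyWord f _ x)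
    rw [ih]

lemma block_comp {m : ℕ} [CompactSpace X] (f : Fin m → X → X) (hf : ∀ i, Continuous (f i)) :
    ∀ (k : ℕ) {ε : ℝ}, 0 < ε → ∃ δ > 0, ∀ (w : ℕ → Fin m) (c : ℕ → X),
      (∀ t < k, dist (f (w t) (c t)) (c (t+1)) ≤ δ) →
      dist (orbFun f w (c 0) k) (c k) ≤ ε := by
  intro k
  induction k with
  | zero =>
    intro ε hε
    exact ⟨ε, hε, fun w c _ => by simp [orbFun]; linarith⟩
  | succ k ih =>
    intro ε hε
    obtain ⟨η, hη, hmod⟩ : ∃ η > 0, ∀ (i : Fin m) (u v : X), dist u v ≤ η →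
        dist (f i u) (f i v) ≤ ε/2 := exists_modulus f hf (by linarith)
    obtain ⟨δ₁, hδ₁, h1⟩ := ih hη
    refine ⟨min δ₁ (ε/2), by positivity, fun w c hc => ?_⟩
    have hk : dist (orbFun f w (c 0) k) (c k) ≤ η :=
      h1 w c fun t ht => (hc t (by omega)).trans (min_le_left _ _)
    calc dist (orbFun f w (c 0) (k+1)) (c (k+1))
        ≤ dist (f (w k) (orbFun f w (c 0) k)) (f (w k) (c k))
          + dist (f (w k) (c k)) (c (k+1)) := dist_triangle _ _ _
      _ ≤ ε/2 + min δ₁ (ε/2) := add_le_add (hmod _ _ _ hk) (hc k (by omega))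
      _ ≤ ε := by
          have := min_le_right δ₁ (ε/2)
          linarith

end AuxC

section Main
variable {X : Type*} [MetricSpace X]

lemma divisor_one {m : ℕ} [CompactSpace X] [ConnectedSpace X] {f : Fin m → X → X}
    (hf : ∀ i, Continuous (f i)) (hct : ChainTransitive f) (x0 : X) {ε : ℝ} (hε : 0 < ε)
    (d : ℕ) (hd : ∀ t ∈ Tset f ε x0, d ∣ t) : d = 1 := by
  have hε2 : 0 < ε/2 := by linarith
  obtain ⟨η, hη, hmod⟩ := exists_modulus f hf hε2
  have hloop : ∀ z : X, ∃ l, 0 < l ∧ ChainFrom f (ε/2) z z l := fun z => hct (ε/2) hε2 z z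
  have hconc : ∀ {u v z : X} {p q : ℕ}, 0 < p → 0 < q → ChainFrom f ε u v p →
      ChainFrom f ε v z q → ChainFrom f ε u z (p + q) := by
    intro u v z p q hp hq h1 h2
    exact ((h1.chainFun hp).trans (h2.chainFun hq)).chainFrom
  have div_loop : ∀ z l, 0 < l → ChainFrom f (ε/2) z z l → d ∣ l := by
    intro z l hl hch
    obtain ⟨p, hp, hpc⟩ := hct (ε/2) hε2 x0 z
    obtain ⟨q, hq, hqc⟩ := hct (ε/2) hε2 z x0
    have hpε := hpc.mono (by linarith : ε/2 ≤ ε)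
    have hqε := hqc.mono (by linarith : ε/2 ≤ ε)
    have h1 : p + q ∈ Tset f ε x0 := ⟨by omega, hconc hp hq hpε hqε⟩
    have h2 : p + (l + q) ∈ Tset f ε x0 :=
      ⟨by omega, hconc hp (by omega) hpε (hconc hl hq (hch.mono (by linarith)) hqε)⟩
    have := Nat.dvd_sub (hd _ h2) (hd _ h1)
    simpa [show p + (l + q) - (p + q) = l by omega] using this
  have bridge : ∀ y z : X, dist y z ≤ η → ∃ l, 0 < l ∧ d ∣ l ∧ ChainFrom f ε y z l := by
    intro y z hyz
    obtain ⟨l, hl, hch⟩ := hloop z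
    have hc2 : ChainFun f (ε/2 + ε/2) y z l :=
      (hch.chainFun hl).perturb_start hl (fun i => hmod i y z hyz)
    exact ⟨l, hl, div_loop z l hl hch, (hc2.chainFrom).mono (by linarith)⟩
  set W : Set X := {y | ∃ n, 0 < n ∧ d ∣ n ∧ ChainFrom f ε x0 y n} with hW
  have hWopen : IsOpen W := by
    rw [Metric.isOpen_iff]
    rintro y ⟨n, hn, hdn, hch⟩
    refine ⟨η, hη, fun z hz => ?_⟩
    obtain ⟨l, hl, hdl, hcyz⟩ := bridge y z (le_of_lt (by simpa [dist_comm] using hz))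
    exact ⟨n + l, by omega, Nat.dvd_add hdn hdl, hconc hn hl hch hcyz⟩
  have hWclosed : IsClosed W := by
    rw [← isOpen_compl_iff, Metric.isOpen_iff]
    intro y hy
    refine ⟨η, hη, fun z hz hzW => ?_⟩
    obtain ⟨n, hn, hdn, hch⟩ := hzW
    obtain ⟨l, hl, hdl, hczy⟩ := bridge z y (le_of_lt hz)
    exact hy ⟨n + l, by omega, Nat.dvd_add hdn hdl, hconc hn hl hch hczy⟩
  have hx0W : x0 ∈ W := by
    obtain ⟨l, hl, hch⟩ := hloop x0
    have hchε := hch.mono (by linarith : ε/2 ≤ ε)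
    exact ⟨l, hl, hd l ⟨hl, hchε⟩, hchε⟩
  have hWuniv : W = Set.univ := IsClopen.eq_univ ⟨hWclosed, hWopen⟩ ⟨x0, hx0W⟩
  obtain ⟨l0, hl0, hch0⟩ := hloop x0
  obtain ⟨w0, hw0, -⟩ := hch0
  let i : Fin m := w0.get ⟨0, by omega⟩
  have hfiW : f i x0 ∈ W := hWuniv ▸ Set.mem_univ _
  obtain ⟨n1, hn1, hdn1, hchn1⟩ := hfiW
  obtain ⟨q1, hq1, hchq1⟩ := hct (ε/2) hε2 (f i x0) x0
  have hq1ε := hchq1.mono (by linarith : ε/2 ≤ ε)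
  have hA : n1 + q1 ∈ Tset f ε x0 := ⟨by omega, hconc hn1 hq1 hchn1 hq1ε⟩
  have hdq1 : d ∣ q1 := by
    have := Nat.dvd_sub (hd _ hA) hdn1
    simpa [show n1 + q1 - n1 = q1 by omega] using this
  have hstep : ChainFrom f ε x0 (f i x0) 1 := (chainFun_single (le_of_lt hε) i x0).chainFrom
  have hB : 1 + q1 ∈ Tset f ε x0 := ⟨by omega, hconc one_pos hq1 hstep hq1ε⟩
  have hone : d ∣ 1 := by
    have := Nat.dvd_sub (hd _ hB) hdq1
    simpa [show 1 + q1 - q1 = 1 by omega] using this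
  exact Nat.dvd_one.mp hone

lemma exists_threshold {m : ℕ} [CompactSpace X] [ConnectedSpace X] {f : Fin m → X → X}
    (hf : ∀ i, Continuous (f i)) (hct : ChainTransitive f) (x0 : X) {ε : ℝ} (hε : 0 < ε) :
    ∃ N, ∀ n ≥ N, n ∈ Tset f ε x0 := by
  apply cofinite_of_addclosed
  · obtain ⟨l, hl, hch⟩ := hct ε hε x0 x0
    exact ⟨l, hl, hch⟩
  · rintro a ⟨ha1, ha2⟩ b ⟨hb1, hb2⟩
    exact ⟨by omega, ((ha2.chainFun ha1).trans (hb2.chainFun hb1)).chainFrom⟩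
  · exact divisor_one hf hct x0 hε

lemma chainMixing_of_chainTransitive {m : ℕ} [CompactSpace X] [ConnectedSpace X]
    {f : Fin m → X → X} (hf : ∀ i, Continuous (f i)) (hct : ChainTransitive f) :
    ChainMixing f := by
  intro ε hε
  have hε2 : 0 < ε/2 := by linarith
  obtain ⟨η0, hη0, hmod⟩ := exists_modulus f hf hε2
  set η := min η0 (ε/2) with hηdef
  have hηpos : 0 < η := lt_min hη0 hε2
  obtain ⟨x0⟩ : Nonempty X := inferInstance
  obtain ⟨N₀, hN₀⟩ := exists_threshold hf hct x0 hε2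
  obtain ⟨t, -, htfin, htcov⟩ :=
    (isCompact_univ : IsCompact (Set.univ : Set X)).finite_cover_balls hηpos
  have hpp : ∀ c : X, ∃ p, 0 < p ∧ ChainFrom f (ε/2) c x0 p := fun c => hct _ hε2 c x0
  have hqq : ∀ c : X, ∃ q, 0 < q ∧ ChainFrom f (ε/2) x0 c q := fun c => hct _ hε2 x0 c
  choose p hp1 hp2 using hpp
  choose q hq1 hq2 using hqq
  set s := htfin.toFinset with hs
  set P := s.sup p with hP
  set Q := s.sup q with hQ
  refine ⟨N₀ + P + Q + 1, by omega, fun a b n hn => ?_⟩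
  have hfind : ∀ u : X, ∃ c ∈ s, dist u c < η := by
    intro u
    have := htcov (Set.mem_univ u)
    simp only [Set.mem_iUnion, Metric.mem_ball] at this
    obtain ⟨c, hc, hdc⟩ := this
    exact ⟨c, (Set.Finite.mem_toFinset htfin).mpr hc, hdc⟩
  obtain ⟨ca, hca, hda⟩ := hfind a
  obtain ⟨cb, hcb, hdb⟩ := hfind b
  have hchain1 : ChainFrom f ε a x0 (p ca) := by
    have h := (hp2 ca).chainFun (hp1 ca)
    have h2 := h.perturb_start (hp1 ca) (fun i => hmod i a ca
      (le_of_lt (lt_of_lt_of_le hda (min_le_left _ _))))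
    exact h2.chainFrom.mono (by linarith)
  have hchain3 : ChainFrom f ε x0 b (q cb) := by
    have h := (hq2 cb).chainFun (hq1 cb)
    have hcbb : dist cb b ≤ ε/2 := by
      have : dist cb b < η := by simpa [dist_comm] using hdb
      exact le_of_lt (lt_of_lt_of_le this (min_le_right _ _))
    have h2 := h.perturb_end (hq1 cb) hcbb
    exact h2.chainFrom.mono (by linarith)
  have hPa : p ca ≤ P := Finset.le_sup hca
  have hQb : q cb ≤ Q := Finset.le_sup hcb
  set tmid := n - p ca - q cb with htm
  have htmid : tmid ≥ N₀ := by omega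
  obtain ⟨htpos, hchmid⟩ := hN₀ tmid htmid
  have hchain2 : ChainFrom f ε x0 x0 tmid := hchmid.mono (by linarith)
  have hfull := ((hchain1.chainFun (hp1 ca)).trans
    ((hchain2.chainFun htpos).trans (hchain3.chainFun (hq1 cb)))).chainFrom
  have hlen : p ca + (tmid + q cb) = n := by omega
  exact hlen ▸ hfull

lemma chainTransitive_of_chainRecurrent {m : ℕ} [CompactSpace X] [ConnectedSpace X]
    {f : Fin m → X → X} (hf : ∀ i, Continuous (f i)) (hcr : ChainRecurrent f) :
    ChainTransitive f := by
  intro ε hε a b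
  have hε2 : 0 < ε/2 := by linarith
  obtain ⟨η, hη, hmod⟩ := exists_modulus f hf hε2
  have hconc : ∀ {u v z : X} {p q : ℕ}, 0 < p → 0 < q → ChainFrom f ε u v p →
      ChainFrom f ε v z q → ChainFrom f ε u z (p + q) := by
    intro u v z p q hp hq h1 h2
    exact ((h1.chainFun hp).trans (h2.chainFun hq)).chainFrom
  have bridge : ∀ y z : X, dist y z ≤ η → ∃ l, 0 < l ∧ ChainFrom f ε y z l := by
    intro y z hyz
    obtain ⟨l, hl, hch⟩ := hcr z (ε/2) hε2
    have hc2 : ChainFun f (ε/2 + ε/2) y z l :=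
      (hch.chainFun hl).perturb_start hl (fun i => hmod i y z hyz)
    exact ⟨l, hl, hc2.chainFrom.mono (by linarith)⟩
  set V : Set X := {y | (∃ n, 0 < n ∧ ChainFrom f ε a y n) ∧
    (∃ n, 0 < n ∧ ChainFrom f ε y a n)} with hV
  have hVopen : IsOpen V := by
    rw [Metric.isOpen_iff]
    rintro y ⟨⟨n, hn, hc1⟩, ⟨n', hn', hc2⟩⟩
    refine ⟨η, hη, fun z hz => ?_⟩
    have hyz : dist y z ≤ η := le_of_lt (by simpa [dist_comm] using hz)
    have hzy : dist z y ≤ η := le_of_lt hz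
    obtain ⟨l, hl, hcyz⟩ := bridge y z hyz
    obtain ⟨l', hl', hczy⟩ := bridge z y hzy
    exact ⟨⟨n + l, by omega, hconc hn hl hc1 hcyz⟩,
      ⟨l' + n', by omega, hconc hl' hn' hczy hc2⟩⟩
  have hVclosed : IsClosed V := by
    rw [← isOpen_compl_iff, Metric.isOpen_iff]
    intro y hy
    refine ⟨η, hη, fun z hz hzV => ?_⟩
    obtain ⟨⟨n, hn, hc1⟩, ⟨n', hn', hc2⟩⟩ := hzV
    have hyz : dist y z ≤ η := le_of_lt (by simpa [dist_comm] using hz)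
    have hzy : dist z y ≤ η := le_of_lt hz
    obtain ⟨l, hl, hczy⟩ := bridge z y hzy
    obtain ⟨l', hl', hcyz⟩ := bridge y z hyz
    exact hy ⟨⟨n + l, by omega, hconc hn hl hc1 hczy⟩,
      ⟨l' + n', by omega, hconc hl' hn' hcyz hc2⟩⟩
  have haV : a ∈ V := by
    obtain ⟨l, hl, hch⟩ := hcr a ε hε
    exact ⟨⟨l, hl, hch⟩, ⟨l, hl, hch⟩⟩
  have hVuniv := IsClopen.eq_univ ⟨hVclosed, hVopen⟩ ⟨a, haV⟩
  have hbV : b ∈ V := hVuniv ▸ Set.mem_univ b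
  exact hbV.1

lemma power_trans {m : ℕ} [CompactSpace X] {f : Fin m → X → X} (hf : ∀ i, Continuous (f i))
    (hcm : ChainMixing f) (k : ℕ) (hk : 0 < k) : ChainTransitive (powerGens f k) := by
  intro ε hε a b
  obtain ⟨δ, hδ, hblock⟩ := block_comp f hf k hε
  obtain ⟨N, hNpos, hN⟩ := hcm δ hδ
  have hkN : N ≤ k * N := Nat.le_mul_of_pos_left N hk
  have hchain := hN a b (k * N) hkN
  obtain ⟨wfn, cseq, h0, hend, hs⟩ := hchain.chainFun (by positivity)
  refine ⟨N, hNpos, ?_⟩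
  refine ChainFun.chainFrom ⟨fun j => fun l : Fin k => wfn (j*k + (k - 1 - (l:ℕ))),
    fun j => cseq (j * k), by simpa using h0, ?_, ?_⟩
  · show cseq (N * k) = b
    rw [Nat.mul_comm]; exact hend
  intro j hj
  have hkey := hblock (fun t => wfn (j*k + t)) (fun t => cseq (j*k + t)) (fun t ht => by
    have hlt : j * k + t < k * N := by
      have h1 : (j+1) * k = j * k + k := by ring
      have h2 : (j+1) * k ≤ N * k := Nat.mul_le_mul_right k hj
      have h3 : N * k = k * N := Nat.mul_comm _ _
      omega
    have := hs (j*k + t) hlt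
    simpa [show j*k + t + 1 = j*k + (t+1) by ring] using this)
  rw [orbFun_eq_applyWord] at hkey
  simpa [powerGens, show (j+1)*k = j*k + k by ring] using hkey

lemma trans_of_power {m : ℕ} {f : Fin m → X → X}
    (h : ChainTransitive (powerGens f 1)) : ChainTransitive f := by
  intro ε hε a b
  obtain ⟨n, hn, w, hw, c, hs, h0, hend⟩ := h ε hε a b
  refine ⟨n, hn, w.map (fun u => u 0), by simp [hw], c, ?_, h0, hend⟩
  intro j hj
  simp only [List.length_map] at hj
  have hstep := hs j hj
  have hpg : ∀ (u : Fin 1 → Fin m) (x : X), powerGens f 1 u x = f (u 0) x := by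
    intro u x
    simp [powerGens, applyWord, List.ofFn_succ]
  rw [hpg] at hstep
  simpa [List.get_eq_getElem, List.getElem_map] using hstep

end Main
theorem stmt16 {X : Type*} [MetricSpace X] [CompactSpace X] [ConnectedSpace X] {m : ℕ}
    (f : Fin m → X → X) (hf : ∀ i, Continuous (f i)) :
    List.TFAE [ChainRecurrent f, ChainTransitive f,
      ∀ k : ℕ, 0 < k → ChainTransitive (powerGens f k), ChainMixing f] := by
  tfae_have 1 → 2 := fun h => chainTransitive_of_chainRecurrent hf h
  tfae_have 2 → 1 := fun h x ε hε => h ε hε x x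
  tfae_have 2 → 4 := fun h => chainMixing_of_chainTransitive hf h
  tfae_have 4 → 3 := fun h k hk => power_trans hf h k hk
  tfae_have 3 → 2 := fun h => trans_of_power (h 1 one_pos)
  tfae_have 4 → 2 := by
    intro h ε hε a b
    obtain ⟨N, hN, hall⟩ := h ε hε
    exact ⟨N, hN, hall a b N le_rfl⟩
  tfae_finish
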